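/- Let 0 < q < 2, s > 0, and let V be a p×d real matrix with VᵀV = I_d whose weak-ℓ_q radius satisfies ‖V‖_{q,w} ≤ s. Then for every k ∈ {1,...,p}, the sum of the squared row norms beyond the k largest satisfies Σ_{i>k} ‖V_{(i),*}‖₂² ≤ (q/(2−q)) · k · (s/k)^{2/q}. -/

import Mathlib

open Matrix Finset

/-- Euclidean norm of the `i`-th row of a matrix. -/
noncomputable def rowNorm {p d : ℕ} (V : Matrix (Fin p) (Fin d) ℝ) (i : Fin p) : ℝ :=
  Real.sqrt (∑ j, (V i j) ^ 2)

lemma bern_step (x a : ℝ) (hx : 1 ≤ x) (ha : 1 ≤ a) :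
    (a - 1) * (x + 1) ^ (-a) ≤ x ^ (1 - a) - (x + 1) ^ (1 - a) := by
  have hx0 : 0 < x := by linarith
  have hx1 : 0 < x + 1 := by linarith
  have hinv : (0:ℝ) < 1 / x := by positivity
  have hb : 1 + a * (1 / x) ≤ (1 + 1 / x) ^ a :=
    one_add_mul_self_le_rpow_one_add (by linarith) ha
  set A := x ^ (a - 1) with hA
  set B := (x + 1) ^ a with hB
  have hApos : 0 < A := Real.rpow_pos_of_pos hx0 _
  have hBpos : 0 < B := Real.rpow_pos_of_pos hx1 _
  have hxa : x ^ a = x * A := by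
    have h := Real.rpow_add hx0 1 (a - 1)
    rw [Real.rpow_one] at h
    rw [hA, ← h]
    congr 1; ring
  have key : (x + a) * A ≤ B := by
    have h1 : x ^ a * (1 + a * (1 / x)) ≤ x ^ a * (1 + 1 / x) ^ a :=
      mul_le_mul_of_nonneg_left hb (Real.rpow_nonneg hx0.le a)
    have h2 : x ^ a * (1 + 1 / x) ^ a = B := by
      rw [hB, ← Real.mul_rpow hx0.le (by positivity)]
      congr 1
      field_simp
    have h3 : x ^ a * (1 + a * (1 / x)) = (x + a) * A := by
      rw [hxa]; field_simp
    rw [h2, h3] at h1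
    exact h1
  have e1 : x ^ (1 - a) = A⁻¹ := by
    rw [hA, ← Real.rpow_neg hx0.le]
    congr 1; ring
  have e3 : (x + 1) ^ (-a) = B⁻¹ := by
    rw [hB, ← Real.rpow_neg hx1.le]
  have e2 : (x + 1) ^ (1 - a) = (x + 1) * B⁻¹ := by
    have h := Real.rpow_add hx1 1 (-a)
    rw [Real.rpow_one] at h
    rw [show (1:ℝ) - a = 1 + -a by ring, h, e3]
  rw [e1, e2, e3]
  have goal' : (x + a) / B ≤ 1 / A := by
    rw [div_le_div_iff₀ hBpos hApos]
    nlinarith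
  rw [div_le_div_iff₀ hBpos hApos, one_mul] at goal'
  have hAB : (a - 1) * B⁻¹ + (x + 1) * B⁻¹ = (x + a) * B⁻¹ := by ring
  have h5 : (x + a) * B⁻¹ ≤ A⁻¹ := by
    rw [← div_eq_mul_inv, inv_eq_one_div, div_le_div_iff₀ hBpos hApos]
    nlinarith
  linarith [hAB, h5]

lemma tail_sum_le (a : ℝ) (ha : 1 < a) (k : ℕ) (hk : 1 ≤ k) (n : ℕ) (hn : k ≤ n) :
    ∑ i ∈ Finset.Ico k n, ((i : ℝ) + 1) ^ (-a) ≤ (k : ℝ) ^ (1 - a) / (a - 1) := by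
  have ha1 : 0 < a - 1 := by linarith
  have main : ∀ m, k ≤ m → (a - 1) * ∑ i ∈ Finset.Ico k m, ((i : ℝ) + 1) ^ (-a)
      ≤ (k : ℝ) ^ (1 - a) - (m : ℝ) ^ (1 - a) := by
    intro m hm
    induction m, hm using Nat.le_induction with
    | base => simp
    | succ m hm ih =>
      rw [Finset.sum_Ico_succ_top hm, mul_add]
      have hb := bern_step (m : ℝ) a (by exact_mod_cast hk.trans hm) ha.le
      push_cast
      push_cast at ih hb
      linarith
  have h := main n hn
  have hn0 : (0:ℝ) ≤ (n : ℝ) ^ (1 - a) := Real.rpow_nonneg (by positivity) _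
  rw [le_div_iff₀ ha1]
  nlinarith [h, hn0]

lemma sum_filter_fin_eq (p k : ℕ) (g : ℕ → ℝ) :
    ∑ i ∈ Finset.univ.filter (fun i : Fin p => k ≤ (i : ℕ)), g (i : ℕ)
      = ∑ j ∈ Finset.Ico k p, g j := by
  rw [Finset.sum_filter, Fin.sum_univ_eq_sum_range (fun j => if k ≤ j then g j else 0) p,
    ← Finset.sum_filter]
  congr 1
  ext j
  simp only [Finset.mem_filter, Finset.mem_range, Finset.mem_Ico]
  omega

theorem sparse_approximation_tail_bound (p d : ℕ) (q s : ℝ)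
    (hq0 : 0 < q) (hq2 : q < 2) (hs : 0 < s)
    (V : Matrix (Fin p) (Fin d) ℝ) (hV : Vᵀ * V = 1)
    (σ : Equiv.Perm (Fin p))
    (hsort : ∀ i j : Fin p, i ≤ j → rowNorm V (σ j) ≤ rowNorm V (σ i))
    (hweak : ∀ j : Fin p, ((j : ℕ) + 1 : ℝ) * rowNorm V (σ j) ^ q ≤ s) :
    ∀ k : ℕ, 1 ≤ k → k ≤ p →
      ∑ i ∈ Finset.univ.filter (fun i : Fin p => k ≤ (i : ℕ)), rowNorm V (σ i) ^ 2
        ≤ q / (2 - q) * k * (s / k) ^ (2 / q) := by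
  intro k hk1 hkp
  set a := 2 / q with haq
  have ha1 : 1 < a := (one_lt_div hq0).2 hq2
  have ha0 : 0 < a := by linarith
  have term_bound : ∀ i : Fin p,
      rowNorm V (σ i) ^ 2 ≤ s ^ a * (((i : ℕ) : ℝ) + 1) ^ (-a) := by
    intro i
    set r := rowNorm V (σ i) with hr
    have hr0 : 0 ≤ r := Real.sqrt_nonneg _
    have hi1 : (0:ℝ) < ((i : ℕ) : ℝ) + 1 := by positivity
    have h2 : r ^ q ≤ s / (((i : ℕ) : ℝ) + 1) := by
      rw [le_div_iff₀ hi1, mul_comm]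
      exact hweak i
    have hr2 : r ^ 2 = (r ^ q) ^ a := by
      rw [← Real.rpow_natCast r 2, ← Real.rpow_mul hr0]
      congr 1
      rw [haq]
      field_simp
      norm_num
    rw [hr2]
    calc (r ^ q) ^ a ≤ (s / (((i : ℕ) : ℝ) + 1)) ^ a :=
          Real.rpow_le_rpow (Real.rpow_nonneg hr0 q) h2 ha0.le
      _ = s ^ a * (((i : ℕ) : ℝ) + 1) ^ (-a) := by
          rw [Real.div_rpow hs.le hi1.le a, Real.rpow_neg hi1.le, div_eq_mul_inv]
  calc ∑ i ∈ Finset.univ.filter (fun i : Fin p => k ≤ (i : ℕ)), rowNorm V (σ i) ^ 2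
      ≤ ∑ i ∈ Finset.univ.filter (fun i : Fin p => k ≤ (i : ℕ)),
          s ^ a * (((i : ℕ) : ℝ) + 1) ^ (-a) :=
        Finset.sum_le_sum fun i _ => term_bound i
    _ = ∑ j ∈ Finset.Ico k p, s ^ a * ((j : ℝ) + 1) ^ (-a) :=
        sum_filter_fin_eq p k (fun j => s ^ a * ((j : ℝ) + 1) ^ (-a))
    _ = s ^ a * ∑ j ∈ Finset.Ico k p, ((j : ℝ) + 1) ^ (-a) := by
        rw [Finset.mul_sum]
    _ ≤ s ^ a * ((k : ℝ) ^ (1 - a) / (a - 1)) := by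
        apply mul_le_mul_of_nonneg_left (tail_sum_le a ha1 k hk1 p hkp)
        positivity
    _ = q / (2 - q) * k * (s / k) ^ a := by
        have hk0 : (0:ℝ) < (k : ℝ) := by exact_mod_cast hk1
        have e1 : (s / (k:ℝ)) ^ a = s ^ a / (k:ℝ) ^ a :=
          Real.div_rpow hs.le hk0.le a
        have e2 : (k : ℝ) ^ (1 - a) = (k:ℝ) / (k:ℝ) ^ a := by
          have h := Real.rpow_add hk0 1 (-a)
          rw [Real.rpow_one, Real.rpow_neg hk0.le] at h
          rw [show (1:ℝ) - a = 1 + -a by ring, h, div_eq_mul_inv]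
        have ham : a - 1 = (2 - q) / q := by
          rw [haq]; field_simp
        have e3 : q / (2 - q) = 1 / (a - 1) := by
          rw [ham, one_div_div]
        have hka : (0:ℝ) < (k:ℝ) ^ a := Real.rpow_pos_of_pos hk0 a
        rw [e1, e2, e3]
        field_simp
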